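/- Let q be a prime power. For any two ordered pairs (P_1,P_2) and (Q_1,Q_2) of distinct points of the Hermitian curve H(2,q^2), there exists an F-linear bijection of F^3 whose induced collineation of PG(2,q^2) maps H(2,q^2) onto itself and sends P_1 to Q_1 and P_2 to Q_2; that is, the group of linear collineations stabilizing H(2,q^2) acts 2-transitively on the points of H(2,q^2). -/

import Mathlib

open Projectivization
open scoped LinearAlgebra.Projectivization

variable (F : Type) [Field F] [Fintype F]

/-- The projective space PG(n, |F|) over `F`, as the projectivization of `Fin (n+1) → F`. -/
abbrev PG (n : ℕ) := ℙ F (Fin (n+1) → F)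

/-- The Hermitian variety `H(n,q^2)`: points `[x_0 : ... : x_n]` with
`x_0^{q+1} + ... + x_n^{q+1} = 0`. -/
def Herm (q n : ℕ) : Set (PG F n) :=
  {p | ∑ i, (p.rep i) ^ (q+1) = 0}

/-- The set of points of `PG(n,q^2)` lying on the line given by a `2`-dimensional subspace. -/
def lineSet (n : ℕ) (W : Submodule F (Fin (n+1) → F)) : Set (PG F n) :=
  {p | p.submodule ≤ W}

/-- `W` determines a line of `PG(n,q^2)`, i.e. it is a `2`-dimensional subspace. -/
def IsLine (n : ℕ) (W : Submodule F (Fin (n+1) → F)) : Prop :=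
  Module.finrank F W = 2

/-- A line is tangent to `H(n,q^2)` if it meets it in exactly one point. -/
def IsTangent (q n : ℕ) (W : Submodule F (Fin (n+1) → F)) : Prop :=
  IsLine F n W ∧ (lineSet F n W ∩ Herm F q n).ncard = 1

/-- The graph `NU(n+1,q^2)`: vertices are points off the Hermitian variety, two distinct
vertices adjacent iff the line joining them is tangent to `H(n,q^2)`. -/
def NU (q n : ℕ) : SimpleGraph {p : PG F n // p ∉ Herm F q n} where
  Adj u v := u ≠ v ∧ IsTangent F q n (Submodule.span F {u.1.rep, v.1.rep})
  symm := ⟨by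
    rintro u v ⟨h1, h2⟩
    exact ⟨h1.symm, by rwa [Set.pair_comm]⟩⟩
  loopless := ⟨fun u h => h.1 rfl⟩

/-- A strongly regular graph with parameters `(v, k, l, m)`. -/
def IsSRG {V : Type} (G : SimpleGraph V) (v k l m : ℤ) : Prop :=
  (Nat.card V : ℤ) = v ∧
  (∀ x, (Nat.card (G.neighborSet x) : ℤ) = k) ∧
  (∀ x y, G.Adj x y → (Nat.card (G.commonNeighbors x y) : ℤ) = l) ∧
  (∀ x y, x ≠ y → ¬ G.Adj x y → (Nat.card (G.commonNeighbors x y) : ℤ) = m)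

/-- The collineation of `PG(n,q^2)` induced by an `F`-linear bijection of `F^{n+1}`. -/
noncomputable def inducedMap (n : ℕ) (f : (Fin (n+1) → F) ≃ₗ[F] (Fin (n+1) → F)) :
    PG F n → PG F n :=
  Projectivization.map (f.toLinearMap) f.injective

section Aux
set_option linter.unusedSectionVars false
set_option linter.unnecessarySeqFocus false
variable {F}


/-- the sesquilinear form -/
private def hform (q : ℕ) (x y : Fin 3 → F) : F := ∑ i, x i * (y i) ^ q

private def hL (q : ℕ) (y : Fin 3 → F) : (Fin 3 → F) →ₗ[F] F where
  toFun x := hform q x y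
  map_add' a b := by simp [hform, add_mul, Finset.sum_add_distrib]
  map_smul' c a := by simp [hform, Finset.mul_sum, mul_assoc]

private lemma hL_apply (q : ℕ) (y x : Fin 3 → F) : hL q y x = hform q x y := rfl

section q

variable {q : ℕ}

private lemma frob_add (hq : IsPrimePow q) (hF : Fintype.card F = q ^ 2) (a b : F) :
    (a + b) ^ q = a ^ q + b ^ q := by
  obtain ⟨p, k, hp, hk, rfl⟩ := hq
  have hp' : p.Prime := Nat.prime_iff.mpr hp
  have hr : CharP F (ringChar F) := ringChar.charP F
  obtain ⟨n, hrp, hcard⟩ := FiniteField.card F (ringChar F)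
  have hpr : p = ringChar F := by
    have h1 : p ∣ ringChar F ^ (n : ℕ) := by
      rw [← hcard, hF, ← pow_mul]
      exact dvd_pow_self p (by positivity)
    exact (Nat.prime_dvd_prime_iff_eq hp' hrp).mp (hp'.dvd_of_dvd_pow h1)
  haveI : CharP F p := hpr ▸ hr
  haveI : Fact p.Prime := ⟨hp'⟩
  exact add_pow_char_pow a b p k

private lemma pow_qq (hF : Fintype.card F = q ^ 2) (a : F) : (a ^ q) ^ q = a := by
  rw [← pow_mul, ← pow_two, ← hF, FiniteField.pow_card]

private lemma frob_sum (hq0 : q ≠ 0) (frob : ∀ a b : F, (a + b) ^ q = a ^ q + b ^ q)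
    {ι : Type*} (s : Finset ι) (t : ι → F) : (∑ i ∈ s, t i) ^ q = ∑ i ∈ s, t i ^ q := by
  induction s using Finset.cons_induction with
  | empty => simp [zero_pow hq0]
  | cons a s ha ih => rw [Finset.sum_cons, Finset.sum_cons, frob, ih]

private lemma hform_conj (hq0 : q ≠ 0) (frob : ∀ a b : F, (a + b) ^ q = a ^ q + b ^ q)
    (pow2 : ∀ a : F, (a ^ q) ^ q = a) (x y : Fin 3 → F) :
    hform q y x = (hform q x y) ^ q := by
  rw [hform, hform, frob_sum hq0 frob]
  exact Finset.sum_congr rfl fun i _ => by rw [mul_pow, pow2, mul_comm]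

private lemma hform_nondeg (hq0 : q ≠ 0) (y : Fin 3 → F) (h : ∀ x, hform q x y = 0) :
    y = 0 := by
  funext i
  have := h (Pi.single i 1)
  simp [hform, Pi.single_apply, Finset.sum_ite_eq, pow_eq_zero_iff hq0] at this
  simpa using this

private lemma hform_smul_left (c : F) (x y : Fin 3 → F) :
    hform q (c • x) y = c * hform q x y := by
  simp [hform, Finset.mul_sum, mul_assoc]

private lemma hform_smul_right (c : F) (x y : Fin 3 → F) :
    hform q x (c • y) = c ^ q * hform q x y := by
  simp [hform, Finset.mul_sum, mul_pow, mul_left_comm]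

private lemma hform_add_right (frob : ∀ a b : F, (a + b) ^ q = a ^ q + b ^ q)
    (x y z : Fin 3 → F) : hform q x (y + z) = hform q x y + hform q x z := by
  simp [hform, frob, mul_add, Finset.sum_add_distrib]

end q
section q2
variable {q : ℕ}

private lemma norm_surj (hq2 : 2 ≤ q) (hF : Fintype.card F = q ^ 2) (a : F) (ha : a ≠ 0)
    (haq : a ^ q = a) : ∃ c : F, c ≠ 0 ∧ c ^ (q + 1) = a := by
  classical
  obtain ⟨g, hg⟩ := IsCyclic.exists_generator (α := Fˣ)
  have horder : orderOf g = q ^ 2 - 1 := by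
    rw [orderOf_eq_card_of_forall_mem_zpowers hg, Nat.card_eq_fintype_card, Fintype.card_units, hF]
  set A := Units.mk0 a ha with hA
  obtain ⟨m, hm⟩ : ∃ m : ℕ, g ^ m = A :=
    (Submonoid.mem_powers_iff _ _).mp ((mem_powers_iff_mem_zpowers).mpr (hg A))
  have ha1 : a ^ (q - 1) = 1 := by
    have h1 : a ^ (q - 1) * a = 1 * a := by
      rw [one_mul, ← pow_succ, Nat.sub_add_cancel (by omega), haq]
    exact mul_right_cancel₀ ha h1
  have hA1 : A ^ (q - 1) = 1 := by
    ext; push_cast [hA]; exact ha1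
  have hdvd : orderOf g ∣ m * (q - 1) := by
    apply orderOf_dvd_of_pow_eq_one
    rw [pow_mul, hm, hA1]
  obtain ⟨s, rfl⟩ : ∃ s, q = s + 1 := ⟨q - 1, by omega⟩
  have hs1 : 1 ≤ s := by omega
  have hfact : (s + 1) ^ 2 - 1 = (s + 1 + 1) * s := by
    have h2 : (s + 1) ^ 2 = (s + 1 + 1) * s + 1 := by ring
    omega
  rw [horder, hfact] at hdvd
  simp only [Nat.add_sub_cancel] at hdvd
  have hdvd2 : (s + 1 + 1) ∣ m := by
    rwa [Nat.mul_dvd_mul_iff_right hs1] at hdvd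
  obtain ⟨t, ht⟩ := hdvd2
  refine ⟨((g : Fˣ) ^ t : Fˣ), Units.ne_zero _, ?_⟩
  have : (g ^ t) ^ (s + 1 + 1) = A := by rw [← pow_mul, mul_comm, ← ht, hm]
  calc ((g ^ t : Fˣ) : F) ^ (s + 1 + 1) = (((g ^ t) ^ (s + 1 + 1) : Fˣ) : F) := by push_cast; rfl
    _ = a := by rw [this]; rfl

end q2
section q3
variable {q : ℕ}

private lemma hL_eq_zero_all (hLw : hL (F := F) q w = 0) : ∀ x, hform q x w = 0 := by
  intro x
  have := congrFun (congrArg (fun (f : (Fin 3 → F) →ₗ[F] F) => f.toFun) hLw) x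
  simpa [hL_apply] using this

/-- Two independent isotropic vectors pair non-trivially. -/
private lemma hform_ne_zero (hq0 : q ≠ 0) (frob : ∀ a b : F, (a + b) ^ q = a ^ q + b ^ q)
    (pow2 : ∀ a : F, (a ^ q) ^ q = a) {u v : Fin 3 → F}
    (hind : LinearIndependent F ![u, v]) (huu : hform q u u = 0) (hvv : hform q v v = 0) :
    hform q u v ≠ 0 := by
  intro huv
  have hvu : hform q v u = 0 := by
    rw [hform_conj hq0 frob pow2, huv, zero_pow hq0]
  obtain ⟨z, hz⟩ := exists_linearIndependent_cons_of_lt_finrank hind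
    (by rw [Module.finrank_fin_fun]; omega)
  set b : Module.Basis (Fin 3) F (Fin 3 → F) :=
    basisOfLinearIndependentOfCardEqFinrank hz (by simp [Module.finrank_fin_fun]) with hbdef
  have hb : ⇑b = ![z, u, v] := coe_basisOfLinearIndependentOfCardEqFinrank _ _
  set w : Fin 3 → F := (hform q z v) ^ q • u + (-(hform q z u)) ^ q • v with hw
  have hcompute : ∀ x : Fin 3 → F, hform q x w
      = hform q z v * hform q x u + (-(hform q z u)) * hform q x v := by
    intro x
    rw [hw, hform_add_right frob, hform_smul_right, hform_smul_right, pow2, pow2]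
  have hw0 : w ≠ 0 := by
    by_cases hzu : hform q z u = 0
    · by_cases hzv : hform q z v = 0
      · -- in this degenerate case contradict directly using u
        exfalso
        have hzero : hL q u = 0 := by
          apply b.ext
          intro i
          rw [hb]
          fin_cases i <;> simp [hL_apply, huu, hvu, hzu]
        have := hform_nondeg (q := q) hq0 u (hL_eq_zero_all hzero)
        exact absurd this (by simpa using hind.ne_zero 0)
      · intro h0
        rw [hw] at h0
        have h1 := (LinearIndependent.pair_iff.mp hind) _ _ h0
        exact hzv (by simpa [pow_eq_zero_iff hq0] using h1.1)
    · intro h0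
      rw [hw] at h0
      have h1 := (LinearIndependent.pair_iff.mp hind) _ _ h0
      exact hzu (by simpa [pow_eq_zero_iff hq0] using h1.2)
  have hLw : hL q w = 0 := by
    apply b.ext
    intro i
    rw [hb]
    fin_cases i <;>
      simp [hL_apply, hcompute, huu, hvu, huv, hvv] <;> ring
  exact hw0 (hform_nondeg (q := q) hq0 w (hL_eq_zero_all hLw))

end q3
section q4
variable {q : ℕ}

private lemma hform_self_rep (p : PG F 2) : hform q p.rep p.rep = ∑ i, (p.rep i) ^ (q + 1) := by
  apply Finset.sum_congr rfl
  intro i _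
  rw [pow_succ, mul_comm]

private lemma mk_eq_of_eq {x y : Fin 3 → F} (hx : x ≠ 0) (h : x = y) :
    Projectivization.mk F x hx = Projectivization.mk F y (h ▸ hx) := by subst h; rfl

private lemma mem_herm_iff (hq0 : q ≠ 0) (x : Fin 3 → F) (hx : x ≠ 0) :
    Projectivization.mk F x hx ∈ Herm F q 2 ↔ hform q x x = 0 := by
  obtain ⟨a, ha⟩ := exists_smul_eq_mk_rep F x hx
  have hrep : hform q (Projectivization.mk F x hx).rep (Projectivization.mk F x hx).rep
      = (a : F) * ((a : F) ^ q * hform q x x) := by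
    rw [← ha]
    have : (a : Fˣ) • x = (a : F) • x := rfl
    rw [this, hform_smul_left, hform_smul_right]
  constructor
  · intro h
    have h0 : hform q (Projectivization.mk F x hx).rep (Projectivization.mk F x hx).rep = 0 := by
      rw [hform_self_rep]; exact h
    rw [hrep] at h0
    rcases mul_eq_zero.mp h0 with h1 | h1
    · exact absurd h1 a.ne_zero
    rcases mul_eq_zero.mp h1 with h2 | h2
    · exact absurd h2 (pow_ne_zero _ a.ne_zero)
    · exact h2
  · intro h
    show ∑ i, ((Projectivization.mk F x hx).rep i) ^ (q + 1) = 0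
    rw [← hform_self_rep, hrep, h, mul_zero, mul_zero]

private lemma rep_mem_herm_iff (hq0 : q ≠ 0) (p : PG F 2) :
    p ∈ Herm F q 2 ↔ hform q p.rep p.rep = 0 := by
  conv_lhs => rw [← Projectivization.mk_rep p]
  exact mem_herm_iff hq0 _ (Projectivization.rep_nonzero p)

/-- Construction of an adapted basis for a pair of distinct points on the Hermitian curve. -/
private lemma exists_good_basis (hq0 : q ≠ 0)
    (frob : ∀ a b : F, (a + b) ^ q = a ^ q + b ^ q)
    (pow2 : ∀ a : F, (a ^ q) ^ q = a)
    (nsurj : ∀ a : F, a ≠ 0 → a ^ q = a → ∃ c : F, c ≠ 0 ∧ c ^ (q + 1) = a)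
    (P₁ P₂ : PG F 2) (h₁ : P₁ ∈ Herm F q 2) (h₂ : P₂ ∈ Herm F q 2) (hne : P₁ ≠ P₂) :
    ∃ b : Module.Basis (Fin 3) F (Fin 3 → F),
      Projectivization.mk F (b 1) (b.ne_zero 1) = P₁ ∧
      Projectivization.mk F (b 2) (b.ne_zero 2) = P₂ ∧
      ∀ i j, hform q (b i) (b j) = ![![1,0,0],![0,0,1],![0,1,0]] i j := by
  set u₀ := P₁.rep with hu₀def
  set v := P₂.rep with hvdef
  have hu₀ : u₀ ≠ 0 := P₁.rep_nonzero
  have hvne : v ≠ 0 := P₂.rep_nonzero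
  have hu₀u₀ : hform q u₀ u₀ = 0 := (rep_mem_herm_iff hq0 P₁).mp h₁
  have hvv : hform q v v = 0 := (rep_mem_herm_iff hq0 P₂).mp h₂
  have hind₀ : LinearIndependent F ![u₀, v] := by
    rw [LinearIndependent.pair_iff' hu₀]
    intro a hav
    apply hne
    rw [← Projectivization.mk_rep P₁, ← Projectivization.mk_rep P₂]
    exact ((Projectivization.mk_eq_mk_iff' F v u₀ hvne hu₀).mpr ⟨a, hav⟩).symm
  have pairind : ∀ (u' : Fin 3 → F) (hu' : u' ≠ 0) (c : F), c ≠ 0 →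
      LinearIndependent F ![u', v] → LinearIndependent F ![c • u', v] := by
    intro u' hu' c hc h
    rw [LinearIndependent.pair_iff' (smul_ne_zero hc hu')]
    intro a hav
    apply (LinearIndependent.pair_iff' hu').mp h (a * c)
    rw [mul_smul]; exact hav
  have huv₀ : hform q u₀ v ≠ 0 := hform_ne_zero hq0 frob pow2 hind₀ hu₀u₀ hvv
  set c₀ := (hform q u₀ v)⁻¹ with hc₀
  have hc₀0 : c₀ ≠ 0 := inv_ne_zero huv₀
  obtain ⟨u, hudef⟩ : ∃ u', u' = c₀ • u₀ := ⟨_, rfl⟩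
  have hu0 : u ≠ 0 := hudef ▸ smul_ne_zero hc₀0 hu₀
  have huu : hform q u u = 0 := by
    rw [hudef, hform_smul_left, hform_smul_right, hu₀u₀, mul_zero, mul_zero]
  have huv : hform q u v = 1 := by rw [hudef, hform_smul_left, hc₀, inv_mul_cancel₀ huv₀]
  have hvu : hform q v u = 1 := by
    rw [hform_conj hq0 frob pow2, huv, one_pow]
  have hmku : Projectivization.mk F u hu0 = P₁ :=
    ((Projectivization.mk_eq_mk_iff' F u u₀ hu0 hu₀).mpr ⟨c₀, hudef.symm⟩).trans
      (Projectivization.mk_rep P₁)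
  have hmkv : Projectivization.mk F v hvne = P₂ := Projectivization.mk_rep P₂
  have hind : LinearIndependent F ![u, v] := by
    rw [hudef]; exact pairind u₀ hu₀ c₀ hc₀0 hind₀
  -- find a nonzero vector orthogonal (on the left) to u and v
  set L := (hL q u).prod (hL q v) with hLdef
  have hker : LinearMap.ker L ≠ ⊥ := by
    intro hbot
    have h1 := LinearMap.finrank_range_add_finrank_ker L
    rw [hbot, finrank_bot, add_zero, Module.finrank_fin_fun] at h1
    have h2 : Module.finrank F (LinearMap.range L) ≤ Module.finrank F (F × F) :=
      Submodule.finrank_le _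
    have h3 : Module.finrank F (F × F) = 2 := by
      simp [Module.finrank_prod]
    omega
  obtain ⟨w₀, hw₀mem, hw₀0⟩ := (Submodule.ne_bot_iff _).mp hker
  have hw₀uv : hform q w₀ u = 0 ∧ hform q w₀ v = 0 := by
    have h0 := LinearMap.mem_ker.mp hw₀mem
    rw [hLdef] at h0
    have := Prod.ext_iff.mp h0
    simpa [hL_apply] using this
  have huw₀ : hform q u w₀ = 0 := by
    rw [hform_conj hq0 frob pow2, hw₀uv.1, zero_pow hq0]
  have hvw₀ : hform q v w₀ = 0 := by
    rw [hform_conj hq0 frob pow2, hw₀uv.2, zero_pow hq0]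
  have hrange : Set.range ![u, v] = {u, v} := by
    simp only [Matrix.range_cons, Matrix.range_empty, Set.union_empty, Set.union_singleton]
    exact Set.pair_comm v u
  have hw₀span : w₀ ∉ Submodule.span F {u, v} := by
    intro hmem
    obtain ⟨a, b, hab⟩ := Submodule.mem_span_pair.mp hmem
    have e1 : hform q u w₀ = b ^ q := by
      rw [← hab, hform_add_right frob, hform_smul_right, hform_smul_right, huu, huv,
        mul_zero, mul_one, zero_add]
    have e2 : hform q v w₀ = a ^ q := by
      rw [← hab, hform_add_right frob, hform_smul_right, hform_smul_right, hvu, hvv,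
        mul_zero, mul_one, add_zero]
    have hb0 : b = 0 := by
      have := e1.symm.trans huw₀
      simpa [pow_eq_zero_iff hq0] using this
    have ha0 : a = 0 := by
      have := e2.symm.trans hvw₀
      simpa [pow_eq_zero_iff hq0] using this
    apply hw₀0
    rw [← hab, ha0, hb0, zero_smul, zero_smul, add_zero]
  have hindt : LinearIndependent F ![w₀, u, v] :=
    LinearIndependent.fin_cons hind (by rwa [hrange])
  set b0 : Module.Basis (Fin 3) F (Fin 3 → F) :=
    basisOfLinearIndependentOfCardEqFinrank hindt (by simp [Module.finrank_fin_fun]) with hb0def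
  have hb0 : ⇑b0 = ![w₀, u, v] := coe_basisOfLinearIndependentOfCardEqFinrank _ _
  have haww : hform q w₀ w₀ ≠ 0 := by
    intro h0
    have hzero : hL q w₀ = 0 := by
      apply b0.ext
      intro i
      rw [hb0]
      fin_cases i <;> simp [hL_apply, h0, huw₀, hvw₀]
    exact hw₀0 (hform_nondeg hq0 w₀ (hL_eq_zero_all hzero))
  have haq : (hform q w₀ w₀) ^ q = hform q w₀ w₀ :=
    (hform_conj hq0 frob pow2 w₀ w₀).symm
  obtain ⟨c, hc0, hcq⟩ := nsurj (hform q w₀ w₀)⁻¹ (inv_ne_zero haww)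
    (by rw [inv_pow, haq])
  obtain ⟨w, hwdef⟩ : ∃ w', w' = c • w₀ := ⟨_, rfl⟩
  have hww : hform q w w = 1 := by
    rw [hwdef, hform_smul_left, hform_smul_right, ← mul_assoc, mul_comm c (c ^ q), ← pow_succ,
      hcq, inv_mul_cancel₀ haww]
  have huw : hform q u w = 0 := by rw [hwdef, hform_smul_right, huw₀, mul_zero]
  have hvw : hform q v w = 0 := by rw [hwdef, hform_smul_right, hvw₀, mul_zero]
  have hwu : hform q w u = 0 := by rw [hwdef, hform_smul_left, hw₀uv.1, mul_zero]
  have hwv : hform q w v = 0 := by rw [hwdef, hform_smul_left, hw₀uv.2, mul_zero]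
  have hwspan : w ∉ Submodule.span F {u, v} := by
    intro hmem
    apply hw₀span
    have := Submodule.smul_mem _ c⁻¹ hmem
    rwa [hwdef, smul_smul, inv_mul_cancel₀ hc0, one_smul] at this
  have hindw : LinearIndependent F ![w, u, v] :=
    LinearIndependent.fin_cons hind (by rwa [hrange])
  set b : Module.Basis (Fin 3) F (Fin 3 → F) :=
    basisOfLinearIndependentOfCardEqFinrank hindw (by simp [Module.finrank_fin_fun]) with hbdef
  have hb : ⇑b = ![w, u, v] := coe_basisOfLinearIndependentOfCardEqFinrank _ _
  have hb1 : b 1 = u := by rw [hb]; simp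
  have hb2 : b 2 = v := by rw [hb]; simp
  refine ⟨b, ?_, ?_, ?_⟩
  · exact (mk_eq_of_eq (b.ne_zero 1) hb1).trans hmku
  · exact (mk_eq_of_eq (b.ne_zero 2) hb2).trans hmkv
  · intro i j
    fin_cases i <;> fin_cases j <;>
      simp [hb, hww, huw, hvw, hwu, hwv, huu, huv, hvu, hvv, Matrix.vecHead, Matrix.vecTail]

end q4
section q5
variable {q : ℕ}

private lemma hform_sum_left (y : Fin 3 → F) (c : Fin 3 → F) (m : Fin 3 → Fin 3 → F) :
    hform q (∑ i, c i • m i) y = ∑ i, c i * hform q (m i) y := by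
  simp only [hform, Finset.sum_apply, Pi.smul_apply, smul_eq_mul, Finset.sum_mul,
    Finset.mul_sum]
  rw [Finset.sum_comm]
  exact Finset.sum_congr rfl fun i _ => Finset.sum_congr rfl fun k _ => by ring

private lemma hform_sum_right (hq0 : q ≠ 0) (frob : ∀ a b : F, (a + b) ^ q = a ^ q + b ^ q)
    (x : Fin 3 → F) (d : Fin 3 → F) (m : Fin 3 → Fin 3 → F) :
    hform q x (∑ j, d j • m j) = ∑ j, (d j) ^ q * hform q x (m j) := by
  simp only [hform, Finset.sum_apply, Pi.smul_apply, smul_eq_mul,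
    frob_sum hq0 frob, mul_pow, Finset.mul_sum]
  rw [Finset.sum_comm]
  exact Finset.sum_congr rfl fun j _ => Finset.sum_congr rfl fun k _ => by ring

private lemma hform_expand (hq0 : q ≠ 0) (frob : ∀ a b : F, (a + b) ^ q = a ^ q + b ^ q)
    (g : Fin 3 → Fin 3 → F) (c d : Fin 3 → F) :
    hform q (∑ i, c i • g i) (∑ j, d j • g j)
      = ∑ i, ∑ j, c i * ((d j) ^ q * hform q (g i) (g j)) := by
  rw [hform_sum_left]
  exact Finset.sum_congr rfl fun i _ => by rw [hform_sum_right hq0 frob, Finset.mul_sum]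

private lemma hform_map (hq0 : q ≠ 0) (frob : ∀ a b : F, (a + b) ^ q = a ^ q + b ^ q)
    (b b' : Module.Basis (Fin 3) F (Fin 3 → F))
    (hbb : ∀ i j, hform q (b i) (b j) = hform q (b' i) (b' j)) (x y : Fin 3 → F) :
    hform q ((b.equiv b' (Equiv.refl _)) x) ((b.equiv b' (Equiv.refl _)) y)
      = hform q x y := by
  set f := b.equiv b' (Equiv.refl _) with hfdef
  have hfb : ∀ i, f (b i) = b' i := fun i => by
    rw [hfdef, b.equiv_apply]; rfl
  have hx : f x = ∑ i, b.repr x i • b' i := by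
    conv_lhs => rw [← Module.Basis.sum_repr b x]
    rw [map_sum]
    exact Finset.sum_congr rfl fun i _ => by rw [map_smul, hfb]
  have hy : f y = ∑ i, b.repr y i • b' i := by
    conv_lhs => rw [← Module.Basis.sum_repr b y]
    rw [map_sum]
    exact Finset.sum_congr rfl fun i _ => by rw [map_smul, hfb]
  rw [hx, hy, hform_expand hq0 frob]
  conv_rhs => rw [← b.sum_repr x, ← b.sum_repr y, hform_expand hq0 frob]
  exact Finset.sum_congr rfl fun i _ => Finset.sum_congr rfl fun j _ => by
    rw [hbb]

end q5

end Aux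

/-- The group of linear collineations stabilizing `H(2,q^2)` acts
`2`-transitively on the points of `H(2,q^2)`. -/
theorem linear_collineations_two_transitive (q : ℕ) (hq : IsPrimePow q)
    (hF : Fintype.card F = q ^ 2)
    (P₁ P₂ Q₁ Q₂ : PG F 2)
    (hP₁ : P₁ ∈ Herm F q 2) (hP₂ : P₂ ∈ Herm F q 2)
    (hQ₁ : Q₁ ∈ Herm F q 2) (hQ₂ : Q₂ ∈ Herm F q 2)
    (hP : P₁ ≠ P₂) (hQ : Q₁ ≠ Q₂) :
    ∃ f : (Fin 3 → F) ≃ₗ[F] (Fin 3 → F),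
      inducedMap F 2 f '' Herm F q 2 = Herm F q 2 ∧
      inducedMap F 2 f P₁ = Q₁ ∧ inducedMap F 2 f P₂ = Q₂ := by
  classical
  have hq0 : q ≠ 0 := by have := hq.two_le; omega
  have frob := frob_add hq hF
  have pow2 := pow_qq hF
  have nsurj : ∀ a : F, a ≠ 0 → a ^ q = a → ∃ c : F, c ≠ 0 ∧ c ^ (q + 1) = a :=
    fun a ha haq => norm_surj hq.two_le hF a ha haq
  obtain ⟨b, hbP1, hbP2, hbG⟩ := exists_good_basis hq0 frob pow2 nsurj P₁ P₂ hP₁ hP₂ hP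
  obtain ⟨b', hbQ1, hbQ2, hbG'⟩ := exists_good_basis hq0 frob pow2 nsurj Q₁ Q₂ hQ₁ hQ₂ hQ
  set f := b.equiv b' (Equiv.refl _) with hfdef
  have hbb : ∀ i j, hform q (b i) (b j) = hform q (b' i) (b' j) := fun i j => by
    rw [hbG, hbG']
  have hpres : ∀ x y, hform q (f x) (f y) = hform q x y := hform_map hq0 frob b b' hbb
  have hpres' : ∀ x y, hform q (f.symm x) (f.symm y) = hform q x y := by
    intro x y
    have := hpres (f.symm x) (f.symm y)
    rw [LinearEquiv.apply_symm_apply, LinearEquiv.apply_symm_apply] at this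
    exact this.symm
  have hf0 : ∀ x : Fin 3 → F, x ≠ 0 → f x ≠ 0 := fun x hx =>
    fun h => hx (by simpa using congrArg f.symm h)
  have hf0' : ∀ x : Fin 3 → F, x ≠ 0 → f.symm x ≠ 0 := fun x hx =>
    fun h => hx (by simpa using congrArg f h)
  have hmapmk : ∀ (x : Fin 3 → F) (hx : x ≠ 0),
      inducedMap F 2 f (Projectivization.mk F x hx)
        = Projectivization.mk F (f x) (hf0 x hx) := by
    intro x hx
    exact Projectivization.map_mk f.toLinearMap f.injective x hx
  have hmapmk' : ∀ (x : Fin 3 → F) (hx : x ≠ 0),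
      inducedMap F 2 f.symm (Projectivization.mk F x hx)
        = Projectivization.mk F (f.symm x) (hf0' x hx) := by
    intro x hx
    exact Projectivization.map_mk f.symm.toLinearMap f.symm.injective x hx
  have hfb : ∀ i, f (b i) = b' i := fun i => by rw [hfdef, b.equiv_apply]; rfl
  refine ⟨f, ?_, ?_, ?_⟩
  · ext z
    simp only [Set.mem_image]
    constructor
    · rintro ⟨p, hp, rfl⟩
      have hp' : hform q p.rep p.rep = 0 := (rep_mem_herm_iff hq0 p).mp hp
      have h1 : inducedMap F 2 f p
          = Projectivization.mk F (f p.rep) (hf0 _ p.rep_nonzero) := by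
        conv_lhs => rw [← Projectivization.mk_rep p]
        exact hmapmk _ p.rep_nonzero
      rw [h1, mem_herm_iff hq0, hpres]
      exact hp'
    · intro hz
      have hz' : hform q z.rep z.rep = 0 := (rep_mem_herm_iff hq0 z).mp hz
      refine ⟨inducedMap F 2 f.symm z, ?_, ?_⟩
      · have h1 : inducedMap F 2 f.symm z
            = Projectivization.mk F (f.symm z.rep) (hf0' _ z.rep_nonzero) := by
          conv_lhs => rw [← Projectivization.mk_rep z]
          exact hmapmk' _ z.rep_nonzero
        rw [h1, mem_herm_iff hq0, hpres']
        exact hz'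
      · have h1 : inducedMap F 2 f.symm z
            = Projectivization.mk F (f.symm z.rep) (hf0' _ z.rep_nonzero) := by
          conv_lhs => rw [← Projectivization.mk_rep z]
          exact hmapmk' _ z.rep_nonzero
        rw [h1, hmapmk _ (hf0' _ z.rep_nonzero)]
        exact (mk_eq_of_eq _ (by simp)).trans (Projectivization.mk_rep z)
  · rw [← hbP1, ← hbQ1, hmapmk _ (b.ne_zero 1)]
    exact mk_eq_of_eq _ (hfb 1)
  · rw [← hbP2, ← hbQ2, hmapmk _ (b.ne_zero 2)]
    exact mk_eq_of_eq _ (hfb 2)
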